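/- For coprime positive integers a and b, the number of inversions I(a,b) of the permutation x ↦ ax mod b on {0,1,...,b-1} satisfies I(a,b) = -3b·s(a,b) + (1/4)(b-1)(b-2), where s(a,b) is the Dedekind sum. -/

import Mathlib

/-- The sawtooth function ((x)) = x - ⌊x⌋ - 1/2 for non-integer x, and 0 for integer x. -/
def saw (x : ℚ) : ℚ := if x.den = 1 then 0 else x - ⌊x⌋ - 1/2

/-- The Dedekind sum s(a,b) = Σ_{k=1}^{b-1} ((k/b))((ka/b)). -/
def dedekindSum (a b : ℕ) : ℚ :=
  ∑ k ∈ Finset.range b, saw ((k : ℚ) / b) * saw ((k * a : ℚ) / b)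

/-- I(a,b): the number of inversions of the permutation x ↦ ax mod b on {0,...,b-1}. -/
def inv' (a b : ℕ) : ℕ :=
  (((Finset.range b) ×ˢ (Finset.range b)).filter
    (fun p => p.1 < p.2 ∧ (a * p.2) % b < (a * p.1) % b)).card


lemma den_one_iff (x : ℚ) : x.den = 1 ↔ ∃ z : ℤ, x = (z : ℚ) := by
  rw [Rat.den_eq_one_iff]
  exact ⟨fun h => ⟨x.num, h.symm⟩, fun ⟨z, hz⟩ => by simp [hz]⟩

lemma saw_eq {x : ℚ} (h : x.den ≠ 1) : saw x = Int.fract x - 1/2 := by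
  rw [saw, if_neg h, ← Int.self_sub_floor]

lemma saw_int (z : ℤ) : saw (z : ℚ) = 0 := by simp [saw]

lemma saw_int_add (z : ℤ) (x : ℚ) : saw ((z : ℚ) + x) = saw x := by
  have hden : ((z:ℚ) + x).den = 1 ↔ x.den = 1 := by
    rw [den_one_iff, den_one_iff]
    constructor
    · rintro ⟨w, hw⟩; exact ⟨w - z, by push_cast; linarith⟩
    · rintro ⟨w, hw⟩; exact ⟨w + z, by push_cast; linarith⟩
  by_cases h : x.den = 1
  · rw [saw, if_pos (hden.mpr h), saw, if_pos h]
  · rw [saw_eq (fun hh => h (hden.mp hh)), saw_eq h, Int.fract_intCast_add]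

lemma fract_ne_zero_of_den {x : ℚ} (h : x.den ≠ 1) : Int.fract x ≠ 0 := by
  intro hf
  exact h (den_one_iff x |>.mpr ⟨⌊x⌋, by rw [Int.fract, sub_eq_zero] at hf; exact hf⟩)

lemma saw_neg (x : ℚ) : saw (-x) = -saw x := by
  by_cases h : x.den = 1
  · rw [saw, saw, if_pos h, if_pos (by rw [Rat.den_neg_eq_den]; exact h), neg_zero]
  · have h' : (-x).den ≠ 1 := by rw [Rat.den_neg_eq_den]; exact h
    rw [saw_eq h', saw_eq h, Int.fract_neg (fract_ne_zero_of_den h)]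
    ring

lemma saw_zero : saw 0 = 0 := by simpa using saw_int 0

lemma saw_half : saw (1/2 : ℚ) = 0 := by norm_num [saw]

lemma saw_nat_half (a : ℕ) : saw ((a : ℚ)/2) = 0 := by
  rcases Nat.even_or_odd a with ⟨c, hc⟩ | ⟨c, hc⟩
  · subst hc; push_cast; rw [show ((c:ℚ) + c)/2 = ((c:ℤ):ℚ) by push_cast; ring, saw_int]
  · subst hc
    rw [show ((2*c+1 : ℕ):ℚ)/2 = ((c:ℤ):ℚ) + 1/2 by push_cast; ring, saw_int_add, saw_half]

lemma saw_sum_zero (a b : ℕ) : ∑ d ∈ Finset.range b, saw ((a * d : ℚ)/b) = 0 := by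
  rcases Nat.eq_zero_or_pos b with rfl | hb
  · simp
  apply Finset.sum_involution (fun d _ => (b - d) % b)
  · intro d hd
    rcases Nat.eq_zero_or_pos d with rfl | hd0
    · norm_num [saw_zero]
    have hdb : d < b := Finset.mem_range.mp hd
    have : (b - d) % b = b - d := Nat.mod_eq_of_lt (by omega)
    rw [this]
    have : ((a : ℚ) * ((b : ℕ) - d : ℕ))/b = ((a:ℤ):ℚ) + (-((a:ℚ) * d / b)) := by
      have : ((b - d : ℕ) : ℚ) = (b : ℚ) - d := by
        push_cast [Nat.cast_sub hdb.le]; ring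
      rw [this]
      field_simp
      push_cast; ring
    rw [this, saw_int_add, saw_neg]
    ring
  · intro d hd hne heq
    rcases Nat.eq_zero_or_pos d with rfl | hd0
    · exact hne (by norm_num [saw_zero])
    have hdb : d < b := Finset.mem_range.mp hd
    rw [Nat.mod_eq_of_lt (by omega)] at heq
    have hb2 : b = 2 * d := by omega
    apply hne
    have : ((a : ℚ) * d)/b = (a : ℚ)/2 := by
      subst hb2
      have : (d : ℚ) ≠ 0 := by positivity
      push_cast
      field_simp
    rw [this, saw_nat_half]
  · intro d hd
    exact Finset.mem_range.mpr (Nat.mod_lt _ hb)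
  · intro d hd
    have hdb : d < b := Finset.mem_range.mp hd
    rcases Nat.eq_zero_or_pos d with rfl | hd0
    · simp
    have h1 : (b - d) % b = b - d := Nat.mod_eq_of_lt (by omega)
    rw [h1, Nat.mod_eq_of_lt (by omega)]
    omega

lemma den_div_ne_one {m b : ℕ} (hb : 0 < b) (h : ¬ b ∣ m) : ((m:ℚ)/b).den ≠ 1 := by
  intro hd
  obtain ⟨z, hz⟩ := (den_one_iff _).mp hd
  have hbQ : (b:ℚ) ≠ 0 := by positivity
  have : (m : ℚ) = z * b := by field_simp at hz; linarith [hz]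
  have : (m : ℤ) = z * b := by exact_mod_cast this
  exact h (Int.ofNat_dvd.mp ⟨z, by rw [this]; ring⟩)

lemma saw_div {m b : ℕ} (hb : 0 < b) (h : ¬ b ∣ m) :
    saw ((m:ℚ)/b) = ((m % b : ℕ):ℚ)/b - 1/2 := by
  rw [saw_eq (den_div_ne_one hb h), Int.fract_div_natCast_eq_div_natCast_mod]

lemma not_dvd_mul {a b k : ℕ} (hab : Nat.Coprime a b) (hk0 : 0 < k) (hkb : k < b) :
    ¬ b ∣ a * k := by
  intro hd
  have : b ∣ k := (Nat.Coprime.dvd_of_dvd_mul_left (hab.symm) hd)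
  exact absurd (Nat.le_of_dvd hk0 this) (by omega)

lemma F_eq {a b k : ℕ} (hab : Nat.Coprime a b) (hb : 0 < b) (hk0 : 0 < k) (hkb : k < b) :
    ((a * k % b : ℕ):ℚ) = b * saw ((a * k : ℚ)/b) + b/2 := by
  have hbQ : (b:ℚ) ≠ 0 := by positivity
  have := saw_div hb (not_dvd_mul hab hk0 hkb)
  push_cast at this ⊢
  field_simp at this ⊢
  linarith

lemma dedekind_eq (a b : ℕ) (hb : 0 < b) :
    (b:ℚ) * dedekindSum a b = ∑ k ∈ Finset.range b, (k:ℚ) * saw ((a * k : ℚ)/b) := by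
  have hbQ : (b:ℚ) ≠ 0 := by positivity
  rw [dedekindSum, Finset.mul_sum]
  have key : ∀ k ∈ Finset.range b,
      (b:ℚ) * (saw ((k : ℚ) / b) * saw ((k * a : ℚ) / b))
      = ((k:ℚ) - b/2) * saw ((a * k : ℚ)/b) := by
    intro k hk
    have hkb := Finset.mem_range.mp hk
    have hcomm : ((k:ℚ) * a) = ((a:ℚ) * k) := by ring
    rcases Nat.eq_zero_or_pos k with rfl | hk0
    · simp [saw_zero]
    · have hndvd : ¬ b ∣ k := fun hd => absurd (Nat.le_of_dvd hk0 hd) (by omega)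
      have h1 : saw ((k:ℚ)/b) = (k:ℚ)/b - 1/2 := by
        have := saw_div hb hndvd
        rwa [Nat.mod_eq_of_lt hkb] at this
      rw [hcomm, h1]
      field_simp
  rw [Finset.sum_congr rfl key]
  have split : ∀ k ∈ Finset.range b, ((k:ℚ) - b/2) * saw ((a * k : ℚ)/b)
      = (k:ℚ) * saw ((a * k : ℚ)/b) - (b/2) * saw ((a * k : ℚ)/b) := by
    intro k _; ring
  rw [Finset.sum_congr rfl split, Finset.sum_sub_distrib, ← Finset.mul_sum]
  have : ∑ k ∈ Finset.range b, saw ((a * k : ℚ)/b) = 0 := by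
    have := saw_sum_zero a b
    simpa using this
  rw [this, mul_zero, sub_zero]

lemma sum_range_cast (b : ℕ) : ∑ k ∈ Finset.range b, (k:ℚ) = (b:ℚ) * (b - 1) / 2 := by
  induction b with
  | zero => simp
  | succ n ih => rw [Finset.sum_range_succ, ih]; push_cast; ring

lemma modeq_inj {a b : ℕ} (hab : Nat.Coprime a b) :
    ∀ i ∈ Finset.range b, ∀ j ∈ Finset.range b, a * i % b = a * j % b → i = j := by
  intro i hi j hj hij
  have h1 : a * i ≡ a * j [MOD b] := hij
  exact (h1.cancel_left_of_coprime hab.symm).eq_of_lt_of_lt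
    (Finset.mem_range.mp hi) (Finset.mem_range.mp hj)

lemma sum_S1 {a b : ℕ} (hab : Nat.Coprime a b) (hb : 0 < b) :
    ∑ k ∈ Finset.range b, ((a * k % b : ℕ):ℚ) = (b:ℚ) * (b - 1) / 2 := by
  have himg : (Finset.range b).image (fun k => a * k % b) = Finset.range b := by
    apply Finset.eq_of_subset_of_card_le
    · intro m hm
      obtain ⟨k, _, rfl⟩ := Finset.mem_image.mp hm
      exact Finset.mem_range.mpr (Nat.mod_lt _ hb)
    · rw [Finset.card_image_of_injOn
        (fun i hi j hj => modeq_inj hab i (Finset.mem_coe.mp hi) j (Finset.mem_coe.mp hj))]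
  have := Finset.sum_image (s := Finset.range b) (g := fun k : ℕ => a * k % b)
    (f := fun m : ℕ => (m:ℚ)) (modeq_inj hab)
  rw [← this, himg, sum_range_cast]

lemma sum_S2 {a b : ℕ} (hab : Nat.Coprime a b) (hb : 0 < b) :
    ∑ k ∈ Finset.range b, (k:ℚ) * ((a * k % b : ℕ):ℚ)
      = (b:ℚ)^2 * dedekindSum a b + (b:ℚ)^2 * (b - 1) / 4 := by
  have key : ∀ k ∈ Finset.range b, (k:ℚ) * ((a * k % b : ℕ):ℚ)
      = (b:ℚ) * ((k:ℚ) * saw ((a * k : ℚ)/b)) + (b/2) * k := by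
    intro k hk
    rcases Nat.eq_zero_or_pos k with rfl | hk0
    · simp
    · rw [F_eq hab hb hk0 (Finset.mem_range.mp hk)]; ring
  rw [Finset.sum_congr rfl key, Finset.sum_add_distrib, ← Finset.mul_sum, ← Finset.mul_sum,
    ← dedekind_eq a b hb, sum_range_cast]
  ring

lemma M1 {a b i j : ℕ} (hab : Nat.Coprime a b) (hb : 0 < b) (hij : i < j) (hjb : j < b) :
    (if a * j % b < a * i % b then (1:ℚ) else 0)
      = 1/2 - (((a * j % b : ℕ):ℚ) - ((a * i % b : ℕ):ℚ))/b
        + saw (((a * (j - i) : ℕ):ℚ)/b) := by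
  have hbQ : (b:ℚ) ≠ 0 := by positivity
  set fi := a * i % b with hfi
  set fj := a * j % b with hfj
  have hfib : fi < b := Nat.mod_lt _ hb
  have hfjb : fj < b := Nat.mod_lt _ hb
  have hne : fi ≠ fj := fun h =>
    absurd (modeq_inj hab i (Finset.mem_range.mpr (hij.trans hjb)) j
      (Finset.mem_range.mpr hjb) h) (Nat.ne_of_lt hij)
  have hqi := Nat.div_add_mod (a * i) b
  have hqj := Nat.div_add_mod (a * j) b
  have hsub : a * (j - i) + a * i = a * j := by
    rw [← Nat.mul_add]; congr 1; omega
  have hnat : a * (j - i) + b * (a * i / b) + fi = b * (a * j / b) + fj := by omega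
  obtain ⟨qi, hqi'⟩ : ∃ q, a * i / b = q := ⟨_, rfl⟩
  obtain ⟨qj, hqj'⟩ : ∃ q, a * j / b = q := ⟨_, rfl⟩
  rw [hqi', hqj'] at hnat
  have hQ : ((a * (j - i) : ℕ):ℚ) + b * (qi:ℚ) + fi = b * (qj:ℚ) + fj := by
    exact_mod_cast hnat
  have harg : ((a * (j - i) : ℕ):ℚ)/b
      = (((qj : ℤ) - (qi : ℤ) : ℤ) : ℚ) + ((fj : ℚ) - fi)/b := by
    have hcast : (((qj : ℤ) - (qi : ℤ) : ℤ) : ℚ) = (qj:ℚ) - (qi:ℚ) := by push_cast; ring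
    rw [hcast]
    field_simp
    push_cast at hQ ⊢
    linarith
  rw [harg, saw_int_add]
  rcases Nat.lt_or_ge fj fi with hlt | hge
  · rw [if_pos hlt]
    have h1 : ((fj:ℚ) - fi)/b = -(((fi - fj : ℕ):ℚ)/b) := by
      rw [Nat.cast_sub hlt.le]; ring
    rw [h1, saw_neg, saw_div hb (fun hd => by
      have := Nat.le_of_dvd (by omega) hd; omega)]
    rw [Nat.mod_eq_of_lt (by omega), Nat.cast_sub hlt.le]
    field_simp
    ring
  · have hlt : fi < fj := by omega
    rw [if_neg (by omega)]
    have h1 : ((fj:ℚ) - fi)/b = ((fj - fi : ℕ):ℚ)/b := by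
      rw [Nat.cast_sub hlt.le]
    rw [h1, saw_div hb (fun hd => by
      have := Nat.le_of_dvd (by omega) hd; omega)]
    rw [Nat.mod_eq_of_lt (by omega), Nat.cast_sub hlt.le]
    ring
lemma inner_ite_lt (b i : ℕ) (c : ℚ) :
    ∑ j ∈ Finset.range b, (if i < j then c else 0) = ((b - (i+1) : ℕ):ℚ) * c := by
  rw [← Finset.sum_filter]
  have h : (Finset.range b).filter (fun j => i < j) = Finset.Ico (i+1) b := by
    ext j; simp [Finset.mem_Ico, Finset.mem_range]; omega
  rw [h, Finset.sum_const, Nat.card_Ico, nsmul_eq_mul]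

lemma inner_ite_gt (b j : ℕ) (c : ℚ) (hj : j ≤ b) :
    ∑ i ∈ Finset.range b, (if i < j then c else 0) = (j:ℚ) * c := by
  rw [← Finset.sum_filter]
  have h : (Finset.range b).filter (fun i => i < j) = Finset.range j := by
    ext i; simp [Finset.mem_range]; omega
  rw [h, Finset.sum_const, Finset.card_range, nsmul_eq_mul]

lemma sum_coeff (b : ℕ) : ∑ i ∈ Finset.range b, ((b - (i+1) : ℕ):ℚ) = (b:ℚ)*((b:ℚ)-1)/2 := by
  have h : ∀ i ∈ Finset.range b, ((b - (i+1) : ℕ):ℚ) = ((b:ℚ) - 1) - (i:ℚ) := by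
    intro i hi
    have hib := Finset.mem_range.mp hi
    rw [Nat.cast_sub (by omega)]
    push_cast; ring
  rw [Finset.sum_congr rfl h, Finset.sum_sub_distrib, Finset.sum_const, Finset.card_range,
    sum_range_cast, nsmul_eq_mul]
  ring

lemma D3swap (b : ℕ) (h : ℕ → ℚ) :
    ∑ i ∈ Finset.range b, ∑ k ∈ Finset.range (b - (i+1)), h k
      = ∑ k ∈ Finset.range b, ((b - (k+1) : ℕ):ℚ) * h k := by
  have e1 : ∀ i ∈ Finset.range b, ∑ k ∈ Finset.range (b - (i+1)), h k
      = ∑ k ∈ Finset.range b, (if k < b - (i+1) then h k else 0) := by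
    intro i hi
    rw [← Finset.sum_filter]
    congr 1
    ext k; simp [Finset.mem_range]; omega
  rw [Finset.sum_congr rfl e1, Finset.sum_comm]
  apply Finset.sum_congr rfl
  intro k hk
  rw [← Finset.sum_filter]
  have h2 : (Finset.range b).filter (fun i => k < b - (i+1)) = Finset.range (b - (k+1)) := by
    ext i; simp [Finset.mem_range]; omega
  rw [h2, Finset.sum_const, Finset.card_range, nsmul_eq_mul]

lemma D3val (a b : ℕ) (hb : 0 < b) :
    ∑ k ∈ Finset.range b, ((b - (k+1) : ℕ):ℚ) * saw (((a*(k+1) : ℕ):ℚ)/b)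
      = -(b:ℚ) * dedekindSum a b := by
  have W : ∑ d ∈ Finset.range b, ((b - d : ℕ):ℚ) * saw (((a*d : ℕ):ℚ)/b)
      = -(b:ℚ) * dedekindSum a b := by
    have pt : ∀ d ∈ Finset.range b, ((b - d : ℕ):ℚ) * saw (((a*d : ℕ):ℚ)/b)
        = (b:ℚ) * saw ((a:ℚ)*d/b) - (d:ℚ) * saw ((a:ℚ)*d/b) := by
      intro d hd
      have hdb := Finset.mem_range.mp hd
      have hc : ((a*d : ℕ):ℚ) = (a:ℚ)*d := by push_cast; ring
      rw [hc, Nat.cast_sub hdb.le]; ring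
    rw [Finset.sum_congr rfl pt, Finset.sum_sub_distrib, ← Finset.mul_sum, saw_sum_zero,
      mul_zero, ← dedekind_eq a b hb]
    ring
  obtain ⟨b', rfl⟩ : ∃ b', b = b'+1 := ⟨b-1, by omega⟩
  rw [Finset.sum_range_succ'] at W
  have hz : (((b'+1) - 0 : ℕ):ℚ) * saw (((a*0 : ℕ):ℚ)/(b'+1:ℕ)) = 0 := by
    norm_num [saw_zero]
  rw [hz, add_zero] at W
  rw [Finset.sum_range_succ]
  have hlast : (((b'+1) - (b'+1) : ℕ):ℚ) * saw (((a*(b'+1) : ℕ):ℚ)/(b'+1:ℕ)) = 0 := by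
    norm_num
  rw [hlast, add_zero]
  exact W

theorem meyer (a b : ℕ) (ha : 0 < a) (hb : 0 < b) (hab : Nat.Coprime a b) :
    (inv' a b : ℚ) = -3 * b * dedekindSum a b + (1 / 4) * (b - 1) * (b - 2) := by
  have hbQ : (b:ℚ) ≠ 0 := by positivity
  have h0 : (inv' a b : ℚ) = ∑ i ∈ Finset.range b, ∑ j ∈ Finset.range b,
      (if i < j ∧ a * j % b < a * i % b then (1:ℚ) else 0) := by
    rw [inv', Finset.card_filter, ← Finset.sum_product']
    push_cast
    apply Finset.sum_congr rfl
    intro p _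
    split <;> simp
  have step2 : ∀ i ∈ Finset.range b, ∀ j ∈ Finset.range b,
      (if i < j ∧ a * j % b < a * i % b then (1:ℚ) else 0) =
      (if i < j then (1/2 : ℚ) else 0)
      - (if i < j then ((a * j % b : ℕ):ℚ)/b else 0)
      + (if i < j then ((a * i % b : ℕ):ℚ)/b else 0)
      + (if i < j then saw (((a*(j-i) : ℕ):ℚ)/b) else 0) := by
    intro i _ j hj
    by_cases h : i < j
    · simp only [h, true_and, if_true]
      rw [M1 hab hb h (Finset.mem_range.mp hj)]
      ring
    · simp [h]
  rw [h0, Finset.sum_congr rfl (fun i hi => Finset.sum_congr rfl (step2 i hi))]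
  simp only [Finset.sum_add_distrib, Finset.sum_sub_distrib]
  have hA : ∑ i ∈ Finset.range b, ∑ j ∈ Finset.range b, (if i < j then (1/2:ℚ) else 0)
      = (b:ℚ)*((b:ℚ)-1)/4 := by
    rw [Finset.sum_congr rfl (fun i _ => inner_ite_lt b i (1/2)), ← Finset.sum_mul, sum_coeff]
    ring
  have hB1 : ∑ i ∈ Finset.range b, ∑ j ∈ Finset.range b,
      (if i < j then ((a * j % b : ℕ):ℚ)/b else 0)
      = (b:ℚ) * dedekindSum a b + (b:ℚ)*((b:ℚ)-1)/4 := by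
    rw [Finset.sum_comm]
    rw [Finset.sum_congr rfl (fun j hj =>
      inner_ite_gt b j _ (Finset.mem_range.mp hj).le)]
    have pt : ∀ j ∈ Finset.range b, (j:ℚ) * (((a * j % b : ℕ):ℚ)/b)
        = ((j:ℚ) * ((a * j % b : ℕ):ℚ))/b := by intro j _; ring
    rw [Finset.sum_congr rfl pt, ← Finset.sum_div, sum_S2 hab hb]
    field_simp
  have hB2 : ∑ i ∈ Finset.range b, ∑ j ∈ Finset.range b,
      (if i < j then ((a * i % b : ℕ):ℚ)/b else 0)
      = ((b:ℚ)-1)*((b:ℚ)-1)/2 - ((b:ℚ) * dedekindSum a b + (b:ℚ)*((b:ℚ)-1)/4) := by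
    rw [Finset.sum_congr rfl (fun i _ => inner_ite_lt b i _)]
    have pt : ∀ i ∈ Finset.range b, ((b - (i+1) : ℕ):ℚ) * (((a * i % b : ℕ):ℚ)/b)
        = (((b:ℚ)-1) * ((a * i % b : ℕ):ℚ) - (i:ℚ) * ((a * i % b : ℕ):ℚ))/b := by
      intro i hi
      have hib := Finset.mem_range.mp hi
      rw [Nat.cast_sub (by omega : i+1 ≤ b)]
      push_cast
      field_simp
      ring
    rw [Finset.sum_congr rfl pt, ← Finset.sum_div, Finset.sum_sub_distrib, ← Finset.mul_sum,
      sum_S1 hab hb, sum_S2 hab hb]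
    field_simp
  have hC : ∑ i ∈ Finset.range b, ∑ j ∈ Finset.range b,
      (if i < j then saw (((a*(j-i) : ℕ):ℚ)/b) else 0)
      = -(b:ℚ) * dedekindSum a b := by
    have hinner : ∀ i ∈ Finset.range b,
        ∑ j ∈ Finset.range b, (if i < j then saw (((a*(j-i) : ℕ):ℚ)/b) else 0)
        = ∑ k ∈ Finset.range (b - (i+1)), saw (((a*(k+1) : ℕ):ℚ)/b) := by
      intro i _
      rw [← Finset.sum_filter]
      have h : (Finset.range b).filter (fun j => i < j) = Finset.Ico (i+1) b := by
        ext j; simp [Finset.mem_Ico, Finset.mem_range]; omega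
      rw [h, Finset.sum_Ico_eq_sum_range]
      apply Finset.sum_congr rfl
      intro k _
      have : i + 1 + k - i = k + 1 := by omega
      rw [this]
    rw [Finset.sum_congr rfl hinner, D3swap, D3val a b hb]
  rw [hA, hB1, hB2, hC]
  ring
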